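/- (Theorem 5, first bound) In the non-oblivious model, assume b_k > 0 for k ∈ {1,2} and r₂ > 0. Then for every m, k ∈ {1,2} and t ∈ ℕ, E[h_{mk}(t)] ≤ ∑_{j=0}^{t} (1 − b_k r₂)^j; consequently, limsup_{T→∞} (1/T) ∑_{t=1}^{T} (1/4) ∑_{m∈{1,2}} ∑_{k∈{1,2}} E[h_{mk}(t)] ≤ (1/2) ∑_{k∈{1,2}} 1/(b_k r₂). -/

import Mathlib

/-- Index type for the primitive random variables of the non-oblivious model:
`inl (m, k, t)` indexes the request variable of user `m`, CP `k`, time `t`;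
`inr (n, k, t)` indexes the uniform variable of eRRH `n`, CP `k`, time `t`. -/
abbrev NFranIdx : Type := (Fin 2 × Fin 2 × ℕ) ⊕ (Fin 2 × Fin 2 × ℕ)

/-- Codomain of each primitive random variable. -/
def NFranType : NFranIdx → Type
  | .inl _ => Fin 3
  | .inr _ => ℝ

instance NFranType.instMeasurableSpace : ∀ i, MeasurableSpace (NFranType i)
  | .inl _ => inferInstanceAs (MeasurableSpace (Fin 3))
  | .inr _ => inferInstanceAs (MeasurableSpace ℝ)

/-- State-dependent command rate for CP 1 (index `0`), as a function of the
two current ages `g1, g2` at the eRRH and the threshold `z`. -/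
noncomputable def nrate1 (r1 r2 : ℝ) (z g1 g2 : ℕ) : ℝ :=
  if z ≤ g1 ∧ z ≤ g2 then (r1 + r2) / 2 else if g2 ≤ g1 then r1 else r2

/-- State-dependent command rate for CP 2 (index `1`). -/
noncomputable def nrate2 (r1 r2 : ℝ) (z g1 g2 : ℕ) : ℝ :=
  if z ≤ g1 ∧ z ≤ g2 then (r1 + r2) / 2 else if g1 < g2 then r1 else r2

/-- Non-oblivious 2-user/2-eRRH/2-CP F-RAN model with threshold `z`. -/
structure NonObliviousFRAN where
  /-- sample space -/
  Ω : Type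
  [mΩ : MeasurableSpace Ω]
  μ : MeasureTheory.Measure Ω
  isProb : MeasureTheory.IsProbabilityMeasure μ
  /-- threshold -/
  z : ℕ
  z_pos : 1 ≤ z
  /-- request rates: `bsplit k n = b_k^{(n+1)}` -/
  bsplit : Fin 2 → Fin 2 → ℝ
  bsplit_nonneg : ∀ k n, 0 ≤ bsplit k n
  bsum_le_one : ∀ k, bsplit k 0 + bsplit k 1 ≤ 1
  /-- command rates `0 ≤ r2 ≤ r1 ≤ 1` -/
  r1 : ℝ
  r2 : ℝ
  r2_nonneg : 0 ≤ r2
  r2_le_r1 : r2 ≤ r1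
  r1_le_one : r1 ≤ 1
  /-- request variables: value `0` = no request, value `n.succ` = request sent to eRRH `n` -/
  R : Fin 2 → Fin 2 → ℕ → Ω → Fin 3
  /-- i.i.d. uniform-[0,1] variables driving the command decisions -/
  U : Fin 2 → Fin 2 → ℕ → Ω → ℝ
  R_meas : ∀ m k t, Measurable (R m k t)
  U_meas : ∀ n k t, Measurable (U n k t)
  R_law : ∀ m k t (n : Fin 2), μ {ω | R m k t ω = n.succ} = ENNReal.ofReal (bsplit k n)
  R_law0 : ∀ m k t, μ {ω | R m k t ω = 0} = ENNReal.ofReal (1 - (bsplit k 0 + bsplit k 1))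
  U_law : ∀ n k t, μ.map (U n k t) = MeasureTheory.volume.restrict (Set.Icc (0 : ℝ) 1)
  /-- all the primitive random variables are mutually independent -/
  indep : ProbabilityTheory.iIndepFun (m := fun i => NFranType.instMeasurableSpace i)
      (fun i => Sum.rec (motive := fun j => Ω → NFranType j)
        (fun p => R p.1 p.2.1 p.2.2) (fun p => U p.1 p.2.1 p.2.2) i) μ

attribute [instance] NonObliviousFRAN.mΩ

open MeasureTheory ProbabilityTheory Filter
open scoped Classical

namespace NonObliviousFRAN

variable (M : NonObliviousFRAN)

/-- The pair of AoI processes `(g_{n1}(t), g_{n2}(t))` at eRRH `n`. -/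
noncomputable def gpair (n : Fin 2) : ℕ → M.Ω → ℕ × ℕ
  | 0 => fun _ => (1, 1)
  | t + 1 => fun ω =>
      ((if (M.U n 0 t ω ≤ nrate1 M.r1 M.r2 M.z (gpair n t ω).1 (gpair n t ω).2)
            ∧ ∃ m : Fin 2, M.R m 0 t ω = n.succ then 1 else (gpair n t ω).1 + 1),
       (if (M.U n 1 t ω ≤ nrate2 M.r1 M.r2 M.z (gpair n t ω).1 (gpair n t ω).2)
            ∧ ∃ m : Fin 2, M.R m 1 t ω = n.succ then 1 else (gpair n t ω).2 + 1))

/-- AoI of CP `k` at eRRH `n`. -/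
noncomputable def g (n k : Fin 2) (t : ℕ) (ω : M.Ω) : ℕ :=
  if k = 0 then (M.gpair n t ω).1 else (M.gpair n t ω).2

/-- The state-dependent command rate `r_{nk}(t)` as a random variable. -/
noncomputable def nrate (n k : Fin 2) (t : ℕ) (ω : M.Ω) : ℝ :=
  if k = 0 then nrate1 M.r1 M.r2 M.z (M.gpair n t ω).1 (M.gpair n t ω).2
  else nrate2 M.r1 M.r2 M.z (M.gpair n t ω).1 (M.gpair n t ω).2

/-- Command indicator: `γ_{nk}(t) = 1` iff `U_{nk}(t) ≤ r_{nk}(t)`. -/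
def cmd (n k : Fin 2) (t : ℕ) (ω : M.Ω) : Prop :=
  M.U n k t ω ≤ M.nrate n k t ω

/-- AoI of CP `k` at user `m`. -/
noncomputable def h (m k : Fin 2) : ℕ → M.Ω → ℕ
  | 0 => fun _ => 1
  | t + 1 => fun ω =>
      if M.R m k t ω = 0 then h m k t ω + 1
      else if M.R m k t ω = 1 then
        (if M.cmd 0 k t ω then 1 else min (h m k t ω) (M.g 0 k t ω) + 1)
      else
        (if M.cmd 1 k t ω then 1 else min (h m k t ω) (M.g 1 k t ω) + 1)

/-- Expected AoI of CP `k` at user `m` at time `t`. -/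
noncomputable def Eh (m k : Fin 2) (t : ℕ) : ℝ := ∫ ω, (M.h m k t ω : ℝ) ∂M.μ

/-- Total request rate of a user for CP `k`: `b_k = b_k^{(1)} + b_k^{(2)}`. -/
def bk (k : Fin 2) : ℝ := M.bsplit k 0 + M.bsplit k 1

end NonObliviousFRAN

namespace NonObliviousFRAN

variable (M : NonObliviousFRAN)

/-- The family of primitive random variables. -/
noncomputable def fam : ∀ i : NFranIdx, M.Ω → NFranType i :=
  fun i => Sum.rec (motive := fun j => M.Ω → NFranType j)
    (fun p => M.R p.1 p.2.1 p.2.2) (fun p => M.U p.1 p.2.1 p.2.2) i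

/-- Time index of a primitive variable. -/
def tIdx : NFranIdx → ℕ := fun i => Sum.elim (fun p => p.2.2) (fun p => p.2.2) i

lemma fam_meas : ∀ i, Measurable (M.fam i)
  | .inl p => M.R_meas p.1 p.2.1 p.2.2
  | .inr p => M.U_meas p.1 p.2.1 p.2.2

/-- σ-algebra generated by the primitive variables strictly before time `t`. -/
noncomputable def Flt (t : ℕ) : MeasurableSpace M.Ω :=
  ⨆ i ∈ {i : NFranIdx | tIdx i < t},
    MeasurableSpace.comap (M.fam i) (NFranType.instMeasurableSpace i)

/-- σ-algebra generated by the primitive variables at time `t`. -/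
noncomputable def Feq (t : ℕ) : MeasurableSpace M.Ω :=
  ⨆ i ∈ {i : NFranIdx | tIdx i = t},
    MeasurableSpace.comap (M.fam i) (NFranType.instMeasurableSpace i)

lemma Flt_le (t : ℕ) : M.Flt t ≤ M.mΩ :=
  iSup₂_le fun i _ => measurable_iff_comap_le.mp (M.fam_meas i)

lemma Feq_le (t : ℕ) : M.Feq t ≤ M.mΩ :=
  iSup₂_le fun i _ => measurable_iff_comap_le.mp (M.fam_meas i)

lemma Flt_mono {s t : ℕ} (hst : s ≤ t) : M.Flt s ≤ M.Flt t :=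
  iSup₂_le fun i hi => le_iSup₂ (f := fun i (_ : i ∈ {i : NFranIdx | tIdx i < t}) =>
    MeasurableSpace.comap (M.fam i) (NFranType.instMeasurableSpace i)) i (lt_of_lt_of_le hi hst)

lemma measU_lt {n k : Fin 2} {s t : ℕ} (hs : s < t) : Measurable[M.Flt t] (M.U n k s) :=
  measurable_iff_comap_le.mpr (le_iSup₂ (f := fun i (_ : i ∈ {i : NFranIdx | tIdx i < t}) =>
    MeasurableSpace.comap (M.fam i) (NFranType.instMeasurableSpace i)) (Sum.inr (n, k, s)) hs)

lemma measR_lt {m k : Fin 2} {s t : ℕ} (hs : s < t) : Measurable[M.Flt t] (M.R m k s) :=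
  measurable_iff_comap_le.mpr (le_iSup₂ (f := fun i (_ : i ∈ {i : NFranIdx | tIdx i < t}) =>
    MeasurableSpace.comap (M.fam i) (NFranType.instMeasurableSpace i)) (Sum.inl (m, k, s)) hs)

lemma measU_eq {n k : Fin 2} {t : ℕ} : Measurable[M.Feq t] (M.U n k t) :=
  measurable_iff_comap_le.mpr (le_iSup₂ (f := fun i (_ : i ∈ {i : NFranIdx | tIdx i = t}) =>
    MeasurableSpace.comap (M.fam i) (NFranType.instMeasurableSpace i)) (Sum.inr (n, k, t)) rfl)

lemma measR_eq {m k : Fin 2} {t : ℕ} : Measurable[M.Feq t] (M.R m k t) :=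
  measurable_iff_comap_le.mpr (le_iSup₂ (f := fun i (_ : i ∈ {i : NFranIdx | tIdx i = t}) =>
    MeasurableSpace.comap (M.fam i) (NFranType.instMeasurableSpace i)) (Sum.inl (m, k, t)) rfl)

end NonObliviousFRAN
namespace NonObliviousFRAN
variable (M : NonObliviousFRAN)

lemma gpair_meas (n : Fin 2) : ∀ t : ℕ, Measurable[M.Flt t] (M.gpair n t)
  | 0 => measurable_const
  | (t + 1) => by
    have ih : Measurable[M.Flt (t + 1)] (M.gpair n t) :=
      (gpair_meas n t).mono (M.Flt_mono (Nat.le_succ t)) le_rfl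
    have hex : ∀ k : Fin 2, MeasurableSet[M.Flt (t + 1)]
        {ω | ∃ m : Fin 2, M.R m k t ω = n.succ} := by
      intro k
      rw [Set.setOf_exists]
      exact MeasurableSet.iUnion fun m =>
        (M.measR_lt (Nat.lt_succ_self t)) (measurableSet_singleton _)
    have hc1 : MeasurableSet[M.Flt (t + 1)]
        {ω | (M.U n 0 t ω ≤ nrate1 M.r1 M.r2 M.z (M.gpair n t ω).1 (M.gpair n t ω).2)
          ∧ ∃ m : Fin 2, M.R m 0 t ω = n.succ} := by
      rw [Set.setOf_and]
      exact MeasurableSet.inter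
        (measurableSet_le (M.measU_lt (Nat.lt_succ_self t))
          ((measurable_of_countable
            (fun p : ℕ × ℕ => nrate1 M.r1 M.r2 M.z p.1 p.2)).comp ih))
        (hex 0)
    have hc2 : MeasurableSet[M.Flt (t + 1)]
        {ω | (M.U n 1 t ω ≤ nrate2 M.r1 M.r2 M.z (M.gpair n t ω).1 (M.gpair n t ω).2)
          ∧ ∃ m : Fin 2, M.R m 1 t ω = n.succ} := by
      rw [Set.setOf_and]
      exact MeasurableSet.inter
        (measurableSet_le (M.measU_lt (Nat.lt_succ_self t))
          ((measurable_of_countable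
            (fun p : ℕ × ℕ => nrate2 M.r1 M.r2 M.z p.1 p.2)).comp ih))
        (hex 1)
    apply Measurable.prod
    · simp only [gpair]
      exact Measurable.ite hc1 measurable_const
        ((measurable_of_countable (fun p : ℕ × ℕ => p.1 + 1)).comp ih)
    · simp only [gpair]
      exact Measurable.ite hc2 measurable_const
        ((measurable_of_countable (fun p : ℕ × ℕ => p.2 + 1)).comp ih)

lemma g_meas (n k : Fin 2) (t : ℕ) : Measurable[M.Flt t] (M.g n k t) := by
  unfold NonObliviousFRAN.g
  split_ifs <;>
    exact (measurable_of_countable _).comp (M.gpair_meas n t)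

lemma nrate_meas (n k : Fin 2) (t : ℕ) : Measurable[M.Flt t] (M.nrate n k t) := by
  unfold NonObliviousFRAN.nrate
  split_ifs
  · exact (measurable_of_countable
      (fun p : ℕ × ℕ => nrate1 M.r1 M.r2 M.z p.1 p.2)).comp (M.gpair_meas n t)
  · exact (measurable_of_countable
      (fun p : ℕ × ℕ => nrate2 M.r1 M.r2 M.z p.1 p.2)).comp (M.gpair_meas n t)

lemma cmd_meas (n k : Fin 2) (t : ℕ) :
    MeasurableSet[M.Flt (t + 1)] {ω | M.cmd n k t ω} :=
  measurableSet_le (M.measU_lt (Nat.lt_succ_self t))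
    ((M.nrate_meas n k t).mono (M.Flt_mono (Nat.le_succ t)) le_rfl)

lemma h_meas (m k : Fin 2) : ∀ t : ℕ, Measurable[M.Flt t] (M.h m k t)
  | 0 => measurable_const
  | (t + 1) => by
    have ih : Measurable[M.Flt (t + 1)] (M.h m k t) :=
      (h_meas m k t).mono (M.Flt_mono (Nat.le_succ t)) le_rfl
    have hR0 : MeasurableSet[M.Flt (t + 1)] {ω | M.R m k t ω = 0} :=
      (M.measR_lt (Nat.lt_succ_self t)) (measurableSet_singleton _)
    have hR1 : MeasurableSet[M.Flt (t + 1)] {ω | M.R m k t ω = 1} :=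
      (M.measR_lt (Nat.lt_succ_self t)) (measurableSet_singleton _)
    have hmin : ∀ n : Fin 2, Measurable[M.Flt (t + 1)]
        (fun ω => min (M.h m k t ω) (M.g n k t ω) + 1) := fun n =>
      (measurable_of_countable (fun p : ℕ × ℕ => min p.1 p.2 + 1)).comp
        (ih.prodMk ((M.g_meas n k t).mono (M.Flt_mono (Nat.le_succ t)) le_rfl))
    simp only [h]
    refine Measurable.ite hR0 ((measurable_of_countable (fun x : ℕ => x + 1)).comp ih) ?_
    refine Measurable.ite hR1 ?_ ?_
    · exact Measurable.ite (M.cmd_meas 0 k t) measurable_const (hmin 0)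
    · exact Measurable.ite (M.cmd_meas 1 k t) measurable_const (hmin 1)

end NonObliviousFRAN
namespace NonObliviousFRAN
variable (M : NonObliviousFRAN)

lemma indep_lt_eq (t : ℕ) : ProbabilityTheory.Indep (M.Flt t) (M.Feq t) M.μ := by
  have h := (ProbabilityTheory.iIndepFun_iff_iIndep _ _ _).mp M.indep
  have hdisj : Disjoint {i : NFranIdx | tIdx i < t} {i : NFranIdx | tIdx i = t} := by
    rw [Set.disjoint_left]
    intro i hi hi'
    simp only [Set.mem_setOf_eq] at hi hi'
    omega
  exact ProbabilityTheory.indep_iSup_of_disjoint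
    (fun i => measurable_iff_comap_le.mp (M.fam_meas i)) h hdisj

/-- The "good" event at time `t` for user `m` and CP `k`. -/
def Bset (m k : Fin 2) (t : ℕ) : Set M.Ω :=
  {ω | (M.R m k t ω = 1 ∧ M.U 0 k t ω ≤ M.r2) ∨ (M.R m k t ω = 2 ∧ M.U 1 k t ω ≤ M.r2)}

lemma Bset_meas (m k : Fin 2) (t : ℕ) : MeasurableSet[M.Feq t] (M.Bset m k t) := by
  unfold NonObliviousFRAN.Bset
  rw [Set.setOf_or, Set.setOf_and, Set.setOf_and]
  refine MeasurableSet.union (MeasurableSet.inter ?_ ?_) (MeasurableSet.inter ?_ ?_)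
  · exact M.measR_eq (measurableSet_singleton _)
  · exact measurableSet_le M.measU_eq measurable_const
  · exact M.measR_eq (measurableSet_singleton _)
  · exact measurableSet_le M.measU_eq measurable_const

lemma measU_le_r2 (n k : Fin 2) (t : ℕ) :
    M.μ {ω | M.U n k t ω ≤ M.r2} = ENNReal.ofReal M.r2 := by
  have h1 : {ω | M.U n k t ω ≤ M.r2} = M.U n k t ⁻¹' Set.Iic M.r2 := rfl
  rw [h1, ← MeasureTheory.Measure.map_apply (M.U_meas n k t) measurableSet_Iic, M.U_law,
    MeasureTheory.Measure.restrict_apply measurableSet_Iic]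
  have h2 : Set.Iic M.r2 ∩ Set.Icc (0 : ℝ) 1 = Set.Icc 0 M.r2 := by
    have hr1 : M.r2 ≤ 1 := le_trans M.r2_le_r1 M.r1_le_one
    ext x
    simp only [Set.mem_inter_iff, Set.mem_Iic, Set.mem_Icc]
    constructor
    · rintro ⟨h, h0, _⟩; exact ⟨h0, h⟩
    · rintro ⟨h0, h⟩; exact ⟨h, h0, le_trans h hr1⟩
  rw [h2, Real.volume_Icc, sub_zero]

lemma indepFun_RU (m k n : Fin 2) (t : ℕ) :
    ProbabilityTheory.IndepFun (M.R m k t) (M.U n k t) M.μ :=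
  M.indep.indepFun (i := Sum.inl (m, k, t)) (j := Sum.inr (n, k, t)) (by simp)

lemma measure_Bset (m k : Fin 2) (t : ℕ) :
    M.μ (M.Bset m k t) = ENNReal.ofReal (M.bk k * M.r2) := by
  have e1 : {ω | M.R m k t ω = 1 ∧ M.U 0 k t ω ≤ M.r2}
      = M.R m k t ⁻¹' {1} ∩ M.U 0 k t ⁻¹' Set.Iic M.r2 := rfl
  have e2 : {ω | M.R m k t ω = 2 ∧ M.U 1 k t ω ≤ M.r2}
      = M.R m k t ⁻¹' {2} ∩ M.U 1 k t ⁻¹' Set.Iic M.r2 := rfl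
  have hB : M.Bset m k t = (M.R m k t ⁻¹' {1} ∩ M.U 0 k t ⁻¹' Set.Iic M.r2)
      ∪ (M.R m k t ⁻¹' {2} ∩ M.U 1 k t ⁻¹' Set.Iic M.r2) := by
    unfold NonObliviousFRAN.Bset
    rw [Set.setOf_or, e1, e2]
  have hd : Disjoint (M.R m k t ⁻¹' {1} ∩ M.U 0 k t ⁻¹' Set.Iic M.r2)
      ((M.R m k t ⁻¹' {2} ∩ M.U 1 k t ⁻¹' Set.Iic M.r2)) := by
    rw [Set.disjoint_left]
    rintro ω ⟨h1, -⟩ ⟨h2, -⟩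
    simp only [Set.mem_preimage, Set.mem_singleton_iff] at h1 h2
    rw [h1] at h2
    exact absurd h2 (by decide)
  have hmeas2 : MeasurableSet (M.R m k t ⁻¹' {2} ∩ M.U 1 k t ⁻¹' Set.Iic M.r2) :=
    ((M.R_meas m k t) (measurableSet_singleton _)).inter
      ((M.U_meas 1 k t) measurableSet_Iic)
  have hR : ∀ nn : Fin 2, M.μ (M.R m k t ⁻¹' {nn.succ}) = ENNReal.ofReal (M.bsplit k nn) := by
    intro nn
    have : M.R m k t ⁻¹' {nn.succ} = {ω | M.R m k t ω = nn.succ} := rfl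
    rw [this, M.R_law]
  have h1 : M.μ (M.R m k t ⁻¹' {1} ∩ M.U 0 k t ⁻¹' Set.Iic M.r2)
      = ENNReal.ofReal (M.bsplit k 0) * ENNReal.ofReal M.r2 := by
    rw [(M.indepFun_RU m k 0 t).measure_inter_preimage_eq_mul _ _
      (measurableSet_singleton _) measurableSet_Iic]
    rw [show ((1 : Fin 3)) = (0 : Fin 2).succ from rfl, hR 0]
    congr 1
    exact M.measU_le_r2 0 k t
  have h2 : M.μ (M.R m k t ⁻¹' {2} ∩ M.U 1 k t ⁻¹' Set.Iic M.r2)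
      = ENNReal.ofReal (M.bsplit k 1) * ENNReal.ofReal M.r2 := by
    rw [(M.indepFun_RU m k 1 t).measure_inter_preimage_eq_mul _ _
      (measurableSet_singleton _) measurableSet_Iic]
    rw [show ((2 : Fin 3)) = (1 : Fin 2).succ from rfl, hR 1]
    congr 1
    exact M.measU_le_r2 1 k t
  rw [hB, MeasureTheory.measure_union hd hmeas2, h1, h2,
    ← ENNReal.ofReal_mul (M.bsplit_nonneg k 0), ← ENNReal.ofReal_mul (M.bsplit_nonneg k 1),
    ← ENNReal.ofReal_add (mul_nonneg (M.bsplit_nonneg k 0) M.r2_nonneg)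
      (mul_nonneg (M.bsplit_nonneg k 1) M.r2_nonneg)]
  congr 1
  unfold NonObliviousFRAN.bk
  ring

end NonObliviousFRAN
namespace NonObliviousFRAN
variable (M : NonObliviousFRAN)

lemma r2_le_nrate (n k : Fin 2) (t : ℕ) (ω : M.Ω) : M.r2 ≤ M.nrate n k t ω := by
  have h21 := M.r2_le_r1
  unfold NonObliviousFRAN.nrate nrate1 nrate2
  split_ifs <;> linarith

lemma h_eq_one_of_mem (m k : Fin 2) (t : ℕ) (ω : M.Ω) (hω : ω ∈ M.Bset m k t) :
    M.h m k (t + 1) ω = 1 := by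
  simp only [h]
  rcases hω with ⟨hR, hU⟩ | ⟨hR, hU⟩
  · have hcmd : M.cmd 0 k t ω := le_trans hU (M.r2_le_nrate 0 k t ω)
    rw [hR]
    simp [hcmd]
  · have hcmd : M.cmd 1 k t ω := le_trans hU (M.r2_le_nrate 1 k t ω)
    rw [hR]
    simp [hcmd]

lemma h_succ_le_add_one (m k : Fin 2) (t : ℕ) (ω : M.Ω) :
    M.h m k (t + 1) ω ≤ M.h m k t ω + 1 := by
  simp only [h]
  split_ifs <;> first
    | omega
    | exact Nat.succ_le_succ (Nat.min_le_left _ _)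

lemma h_pointwise (m k : Fin 2) (t : ℕ) (ω : M.Ω) :
    (M.h m k (t + 1) ω : ℝ) ≤
      1 + (M.Bset m k t)ᶜ.indicator (fun _ => (1 : ℝ)) ω * (M.h m k t ω : ℝ) := by
  by_cases hω : ω ∈ M.Bset m k t
  · rw [M.h_eq_one_of_mem m k t ω hω, Set.indicator_of_notMem (by simpa using hω)]
    norm_num
  · rw [Set.indicator_of_mem (by simpa using hω) (fun _ => (1 : ℝ)), one_mul]
    have := M.h_succ_le_add_one m k t ω
    have : (M.h m k (t + 1) ω : ℝ) ≤ (M.h m k t ω : ℝ) + 1 := by exact_mod_cast this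
    linarith

lemma h_le_bound (m k : Fin 2) : ∀ t : ℕ, ∀ ω : M.Ω, M.h m k t ω ≤ t + 1
  | 0 => fun ω => le_refl 1
  | (t + 1) => fun ω =>
      le_trans (M.h_succ_le_add_one m k t ω)
        (Nat.succ_le_succ (h_le_bound m k t ω))

lemma h_integrable (m k : Fin 2) (t : ℕ) :
    MeasureTheory.Integrable (fun ω => (M.h m k t ω : ℝ)) M.μ := by
  haveI := M.isProb
  have hmeas : Measurable (fun ω => (M.h m k t ω : ℝ)) :=
    (measurable_of_countable (fun x : ℕ => (x : ℝ))).comp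
      ((M.h_meas m k t).mono (M.Flt_le t) le_rfl)
  refine (MeasureTheory.integrable_const ((t : ℝ) + 1)).mono'
    hmeas.aestronglyMeasurable (MeasureTheory.ae_of_all _ fun ω => ?_)
  rw [Real.norm_eq_abs, abs_of_nonneg (by positivity)]
  have := M.h_le_bound m k t ω
  push_cast
  exact_mod_cast Nat.cast_le.mpr this

end NonObliviousFRAN
namespace NonObliviousFRAN
variable (M : NonObliviousFRAN)

lemma indicator_integral (m k : Fin 2) (t : ℕ) :
    ∫ ω, (M.Bset m k t)ᶜ.indicator (fun _ => (1 : ℝ)) ω ∂M.μ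
      = 1 - M.bk k * M.r2 := by
  haveI := M.isProb
  have hBm : MeasurableSet (M.Bset m k t) :=
    M.Feq_le t _ (M.Bset_meas m k t)
  have hpt : (fun ω => (M.Bset m k t)ᶜ.indicator (fun _ => (1 : ℝ)) ω)
      = fun ω => 1 - (M.Bset m k t).indicator (fun _ => (1 : ℝ)) ω := by
    funext ω
    by_cases hω : ω ∈ M.Bset m k t <;> simp [hω]
  rw [hpt, MeasureTheory.integral_sub (MeasureTheory.integrable_const 1)
    ((MeasureTheory.integrable_const (1 : ℝ)).indicator hBm),
    MeasureTheory.integral_const, MeasureTheory.integral_indicator_const _ hBm,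
    measureReal_def, measureReal_def, M.measure_Bset m k t]
  have hnn : 0 ≤ M.bk k * M.r2 := by
    have := M.bsplit_nonneg k 0
    have := M.bsplit_nonneg k 1
    have := M.r2_nonneg
    unfold NonObliviousFRAN.bk
    positivity
  simp [ENNReal.toReal_ofReal hnn]

lemma Eh_succ_le (m k : Fin 2) (t : ℕ) :
    M.Eh m k (t + 1) ≤ 1 + (1 - M.bk k * M.r2) * M.Eh m k t := by
  haveI := M.isProb
  set q : ℝ := 1 - M.bk k * M.r2 with hq
  have hBm : MeasurableSet (M.Bset m k t) := M.Feq_le t _ (M.Bset_meas m k t)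
  set ind : M.Ω → ℝ := (M.Bset m k t)ᶜ.indicator (fun _ => (1 : ℝ)) with hind
  have hindmeas : Measurable[M.Feq t] ind :=
    measurable_const.indicator (M.Bset_meas m k t).compl
  have hindint : MeasureTheory.Integrable ind M.μ :=
    (MeasureTheory.integrable_const (1 : ℝ)).indicator hBm.compl
  have hhint := M.h_integrable m k t
  have hIndep : ProbabilityTheory.IndepFun ind (fun ω => (M.h m k t ω : ℝ)) M.μ := by
    have h1 : MeasurableSpace.comap ind Real.measurableSpace ≤ M.Feq t :=
      measurable_iff_comap_le.mp hindmeas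
    have h2 : MeasurableSpace.comap (fun ω => (M.h m k t ω : ℝ)) Real.measurableSpace
        ≤ M.Flt t :=
      measurable_iff_comap_le.mp
        ((measurable_of_countable (fun x : ℕ => (x : ℝ))).comp (M.h_meas m k t))
    exact ProbabilityTheory.indep_of_indep_of_le_left
      (ProbabilityTheory.indep_of_indep_of_le_right ((M.indep_lt_eq t).symm) h2) h1
  have hmulint : MeasureTheory.Integrable (fun ω => ind ω * (M.h m k t ω : ℝ)) M.μ :=
    hhint.bdd_mul hindint.aestronglyMeasurable
      (c := 1) (MeasureTheory.ae_of_all _ fun ω => by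
        rw [hind, Real.norm_eq_abs]
        by_cases hω : ω ∈ (M.Bset m k t)ᶜ <;> simp [hω])
  have hmono : M.Eh m k (t + 1) ≤ ∫ ω, (1 + ind ω * (M.h m k t ω : ℝ)) ∂M.μ := by
    refine MeasureTheory.integral_mono (M.h_integrable m k (t + 1))
      ((MeasureTheory.integrable_const 1).add hmulint) ?_
    intro ω
    exact M.h_pointwise m k t ω
  have hsplit : ∫ ω, (1 + ind ω * (M.h m k t ω : ℝ)) ∂M.μ
      = 1 + ∫ ω, ind ω * (M.h m k t ω : ℝ) ∂M.μ := by
    rw [MeasureTheory.integral_add (MeasureTheory.integrable_const 1) hmulint]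
    simp
  have hprod : ∫ ω, ind ω * (M.h m k t ω : ℝ) ∂M.μ = q * M.Eh m k t := by
    have := hIndep.integral_mul_eq_mul_integral hindint.aestronglyMeasurable hhint.aestronglyMeasurable
    have heq : (ind * fun ω => (M.h m k t ω : ℝ)) = fun ω => ind ω * (M.h m k t ω : ℝ) := rfl
    rw [heq] at this
    rw [this, M.indicator_integral m k t]
    rfl
  rw [hsplit, hprod] at hmono
  exact hmono

end NonObliviousFRAN
namespace NonObliviousFRAN
variable (M : NonObliviousFRAN)

lemma Eh_zero (m k : Fin 2) : M.Eh m k 0 = 1 := by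
  haveI := M.isProb
  unfold NonObliviousFRAN.Eh
  simp only [h, Nat.cast_one]
  simp

lemma Eh_nonneg (m k : Fin 2) (t : ℕ) : 0 ≤ M.Eh m k t :=
  MeasureTheory.integral_nonneg fun ω => Nat.cast_nonneg _

end NonObliviousFRAN

lemma nfran_geo_le {q : ℝ} (h0 : 0 ≤ q) (h1 : q < 1) (n : ℕ) :
    ∑ j ∈ Finset.range n, q ^ j ≤ 1 / (1 - q) := by
  have h2 : 0 < 1 - q := by linarith
  rw [le_div_iff₀ h2]
  have h3 := geom_sum_mul q n
  have h4 : (0 : ℝ) ≤ q ^ n := pow_nonneg h0 n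
  nlinarith



/-- Theorem 5, first bound: in the non-oblivious model, if
`b_k > 0` and `r₂ > 0`, then `E[h_{mk}(t)] ≤ ∑_{j=0}^t (1 - b_k r₂)^j` and the
long-run average user AoI is at most `(1/2) ∑_k 1/(b_k r₂)`. -/
theorem stmt16 (M : NonObliviousFRAN) (hb : ∀ k : Fin 2, 0 < M.bk k)
    (hr2 : 0 < M.r2) :
    (∀ (m k : Fin 2) (t : ℕ),
        M.Eh m k t ≤ ∑ j ∈ Finset.range (t + 1), (1 - M.bk k * M.r2) ^ j) ∧
    limsup
      (fun T : ℕ =>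
        (1 / (T : ℝ)) * ∑ t ∈ Finset.Icc 1 T,
          (1 / 4 : ℝ) * ∑ m : Fin 2, ∑ k : Fin 2, M.Eh m k t)
      atTop
    ≤ (1 / 2 : ℝ) * ∑ k : Fin 2, 1 / (M.bk k * M.r2) := by
  haveI := M.isProb
  have hbk_le_one : ∀ k : Fin 2, M.bk k ≤ 1 := fun k => M.bsum_le_one k
  have hr2_le_one : M.r2 ≤ 1 := le_trans M.r2_le_r1 M.r1_le_one
  have hprod_pos : ∀ k : Fin 2, 0 < M.bk k * M.r2 := fun k => mul_pos (hb k) hr2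
  have hprod_le_one : ∀ k : Fin 2, M.bk k * M.r2 ≤ 1 := fun k =>
    mul_le_one₀ (hbk_le_one k) M.r2_nonneg hr2_le_one
  have hq0 : ∀ k : Fin 2, 0 ≤ 1 - M.bk k * M.r2 := fun k => by
    have := hprod_le_one k; linarith
  have hq1 : ∀ k : Fin 2, 1 - M.bk k * M.r2 < 1 := fun k => by
    have := hprod_pos k; linarith
  have part1 : ∀ (m k : Fin 2) (t : ℕ),
      M.Eh m k t ≤ ∑ j ∈ Finset.range (t + 1), (1 - M.bk k * M.r2) ^ j := by
    intro m k t
    induction t with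
    | zero => simp [M.Eh_zero m k]
    | succ t ih =>
      have h1 := M.Eh_succ_le m k t
      have h2 : (1 - M.bk k * M.r2) * M.Eh m k t ≤
          (1 - M.bk k * M.r2) * ∑ j ∈ Finset.range (t + 1), (1 - M.bk k * M.r2) ^ j :=
        mul_le_mul_of_nonneg_left ih (hq0 k)
      rw [geom_sum_succ]
      linarith
  refine ⟨part1, ?_⟩
  have hEh_le : ∀ (m k : Fin 2) (t : ℕ), M.Eh m k t ≤ 1 / (M.bk k * M.r2) := by
    intro m k t
    refine (part1 m k t).trans ?_
    have := nfran_geo_le (hq0 k) (hq1 k) (t + 1)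
    have heq : 1 - (1 - M.bk k * M.r2) = M.bk k * M.r2 := by ring
    rwa [heq] at this
  set C : ℝ := (1 / 2 : ℝ) * ∑ k : Fin 2, 1 / (M.bk k * M.r2) with hC
  have hinv_nonneg : ∀ k : Fin 2, 0 ≤ 1 / (M.bk k * M.r2) := fun k =>
    (one_div_pos.mpr (hprod_pos k)).le
  have hC0 : 0 ≤ C := by
    rw [hC]
    have : 0 ≤ ∑ k : Fin 2, 1 / (M.bk k * M.r2) :=
      Finset.sum_nonneg fun k _ => hinv_nonneg k
    linarith
  have hterm : ∀ t : ℕ, (1 / 4 : ℝ) * ∑ m : Fin 2, ∑ k : Fin 2, M.Eh m k t ≤ C := by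
    intro t
    have hs : ∑ m : Fin 2, ∑ k : Fin 2, M.Eh m k t
        ≤ ∑ _m : Fin 2, ∑ k : Fin 2, 1 / (M.bk k * M.r2) :=
      Finset.sum_le_sum fun m _ => Finset.sum_le_sum fun k _ => hEh_le m k t
    have hs2 : ∑ _m : Fin 2, ∑ k : Fin 2, 1 / (M.bk k * M.r2)
        = 2 * ∑ k : Fin 2, 1 / (M.bk k * M.r2) := by
      rw [Finset.sum_const]
      simp
      ring
    rw [hC]
    rw [hs2] at hs
    linarith
  have hfC : ∀ T : ℕ,
      (1 / (T : ℝ)) * ∑ t ∈ Finset.Icc 1 T,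
        (1 / 4 : ℝ) * ∑ m : Fin 2, ∑ k : Fin 2, M.Eh m k t ≤ C := by
    intro T
    rcases Nat.eq_zero_or_pos T with hT | hT
    · subst hT; simp [hC0]
    · have hTpos : (0 : ℝ) < T := by exact_mod_cast hT
      have hsum : ∑ t ∈ Finset.Icc 1 T,
          (1 / 4 : ℝ) * ∑ m : Fin 2, ∑ k : Fin 2, M.Eh m k t
          ≤ (T : ℝ) * C := by
        calc ∑ t ∈ Finset.Icc 1 T, (1 / 4 : ℝ) * ∑ m : Fin 2, ∑ k : Fin 2, M.Eh m k t
            ≤ ∑ _t ∈ Finset.Icc 1 T, C := Finset.sum_le_sum fun t _ => hterm t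
          _ = (T : ℝ) * C := by
              rw [Finset.sum_const, Nat.card_Icc]
              simp [nsmul_eq_mul]
      have h2 : (1 / (T : ℝ)) * ∑ t ∈ Finset.Icc 1 T,
          (1 / 4 : ℝ) * ∑ m : Fin 2, ∑ k : Fin 2, M.Eh m k t
          ≤ (1 / (T : ℝ)) * ((T : ℝ) * C) :=
        mul_le_mul_of_nonneg_left hsum (by positivity)
      have h3 : (1 / (T : ℝ)) * ((T : ℝ) * C) = C := by
        field_simp
      linarith
  have hf0 : ∀ T : ℕ, (0 : ℝ) ≤
      (1 / (T : ℝ)) * ∑ t ∈ Finset.Icc 1 T,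
        (1 / 4 : ℝ) * ∑ m : Fin 2, ∑ k : Fin 2, M.Eh m k t := by
    intro T
    refine mul_nonneg (by positivity) (Finset.sum_nonneg fun t _ => ?_)
    refine mul_nonneg (by norm_num) (Finset.sum_nonneg fun m _ =>
      Finset.sum_nonneg fun k _ => M.Eh_nonneg m k t)
  exact Filter.limsup_le_of_le
    (Filter.isCoboundedUnder_le_of_le Filter.atTop hf0)
    (Filter.Eventually.of_forall hfC)
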